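/- Let 𝒞 be a left triangulated category with a dℤ-cluster tilting subcategory 𝒳. Then the subcategory dℤ𝒳 = {objects isomorphic to (X, dk) : X ∈ 𝒳, k ∈ ℤ} is a dℤ-cluster tilting subcategory of the triangulated stabilization ℤ𝒞. -/

import Mathlib

open CategoryTheory CategoryTheory.Limits ZeroObject

universe w w' v u

namespace Paper

variable (C : Type u) [Category.{v} C] [Preadditive C] [HasZeroObject C] [HasBinaryBiproducts C]

/-- A Quillen exact structure on an additive category: a class of distinguished
kernel-cokernel pairs (`ses f g` meaning `0 → X → Y → Z → 0` is a conflation)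
satisfying the axioms of exact categories. -/
structure ExactStructure where
  ses : ∀ ⦃X Y Z : C⦄, (X ⟶ Y) → (Y ⟶ Z) → Prop
  comp_zero : ∀ ⦃X Y Z : C⦄ {f : X ⟶ Y} {g : Y ⟶ Z}, ses f g → f ≫ g = 0
  isKernel : ∀ ⦃X Y Z : C⦄ {f : X ⟶ Y} {g : Y ⟶ Z} (h : ses f g),
      Nonempty (IsLimit (KernelFork.ofι f (comp_zero h)))
  isCokernel : ∀ ⦃X Y Z : C⦄ {f : X ⟶ Y} {g : Y ⟶ Z} (h : ses f g),
      Nonempty (IsColimit (CokernelCofork.ofπ g (comp_zero h)))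
  ses_id_zero : ∀ X : C, ses (𝟙 X) (0 : X ⟶ 0)
  ses_zero_id : ∀ X : C, ses (0 : (0 : C) ⟶ X) (𝟙 X)
  ses_split : ∀ X Y : C, ses (biprod.inl : X ⟶ X ⊞ Y) (biprod.snd : X ⊞ Y ⟶ Y)
  infl_comp : ∀ ⦃X Y Z : C⦄ {f : X ⟶ Y} {g : Y ⟶ Z},
      (∃ (U : C) (u : Y ⟶ U), ses f u) → (∃ (V : C) (v : Z ⟶ V), ses g v) →
      ∃ (W : C) (w : Z ⟶ W), ses (f ≫ g) w
  defl_comp : ∀ ⦃X Y Z : C⦄ {f : X ⟶ Y} {g : Y ⟶ Z},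
      (∃ (U : C) (u : U ⟶ X), ses u f) → (∃ (V : C) (v : V ⟶ Y), ses v g) →
      ∃ (W : C) (w : W ⟶ X), ses w (f ≫ g)
  pushout_infl : ∀ ⦃X Y Z : C⦄ (f : X ⟶ Y) (g : X ⟶ Z),
      (∃ (U : C) (u : Y ⟶ U), ses f u) →
      ∃ (W : C) (h : Y ⟶ W) (k : Z ⟶ W), (∃ (V : C) (v : W ⟶ V), ses k v) ∧ IsPushout f g h k
  pullback_defl : ∀ ⦃X Y Z : C⦄ (f : Y ⟶ X) (g : Z ⟶ X),
      (∃ (U : C) (u : U ⟶ Y), ses u f) →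
      ∃ (W : C) (h : W ⟶ Y) (k : W ⟶ Z), (∃ (V : C) (v : V ⟶ W), ses v h) ∧ IsPullback h k f g

variable {C}

/-- Admissible monomorphisms. -/
def ExactStructure.Inflation (E : ExactStructure C) {X Y : C} (f : X ⟶ Y) : Prop :=
  ∃ (Z : C) (g : Y ⟶ Z), E.ses f g

/-- Admissible epimorphisms. -/
def ExactStructure.Deflation (E : ExactStructure C) {Y Z : C} (g : Y ⟶ Z) : Prop :=
  ∃ (X : C) (f : X ⟶ Y), E.ses f g

/-- Projective objects with respect to an exact structure. -/
def ExactStructure.Proj (E : ExactStructure C) (P : C) : Prop :=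
  ∀ ⦃Y Z : C⦄ (g : Y ⟶ Z), E.Deflation g → ∀ h : P ⟶ Z, ∃ k : P ⟶ Y, k ≫ g = h

/-- The exact category has enough projectives. -/
def EnoughProj (E : ExactStructure C) : Prop :=
  ∀ X : C, ∃ (P : C) (p : P ⟶ X), E.Proj P ∧ E.Deflation p

/-- The stable relation: two morphisms are identified iff their difference factors
through a projective object. -/
def stableRel (E : ExactStructure C) : HomRel C := fun {X Y} f g =>
  ∃ (P : C) (a : X ⟶ P) (b : P ⟶ Y), E.Proj P ∧ a ≫ b = f - g

/-- The stable category `ℰ/𝒫`. -/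
abbrev St (E : ExactStructure C) := CategoryTheory.Quotient (stableRel E)

/-- The projection functor `ℰ → ℰ/𝒫`. -/
def stq (E : ExactStructure C) : C ⥤ St E := Quotient.functor _

end Paper

namespace Paper

variable {C : Type u} [Category.{v} C] [Preadditive C] [HasZeroObject C] [HasBinaryBiproducts C]

/-- An `n`-fold Yoneda extension `0 → B → X_n → ⋯ → X_1 → A → 0`, encoded
recursively by splicing off the leftmost conflation. -/
inductive NExt (E : ExactStructure C) : ℕ → C → C → Type (max u v)
  | one {A B Y : C} (f : B ⟶ Y) (g : Y ⟶ A) (h : E.ses f g) : NExt E 1 A B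
  | step {A B K Y : C} {n : ℕ} (f : B ⟶ Y) (g : Y ⟶ K) (h : E.ses f g)
      (ξ : NExt E n A K) : NExt E (n + 1) A B

/-- Morphisms of Yoneda extensions over given maps on the two end objects. -/
inductive NExtMor (E : ExactStructure C) :
    ∀ {n : ℕ} {A A' B B' : C}, (B ⟶ B') → (A ⟶ A') → NExt E n A B → NExt E n A' B' → Prop
  | one {A A' B B' Y Y' : C} {β : B ⟶ B'} {α : A ⟶ A'}
      {f : B ⟶ Y} {g : Y ⟶ A} {h : E.ses f g}
      {f' : B' ⟶ Y'} {g' : Y' ⟶ A'} {h' : E.ses f' g'}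
      (y : Y ⟶ Y') (hy₁ : f ≫ y = β ≫ f') (hy₂ : y ≫ g' = g ≫ α) :
      NExtMor E β α (NExt.one f g h) (NExt.one f' g' h')
  | step {n : ℕ} {A A' B B' K K' Y Y' : C} {β : B ⟶ B'} {α : A ⟶ A'}
      {f : B ⟶ Y} {g : Y ⟶ K} {h : E.ses f g} {ξ : NExt E n A K}
      {f' : B' ⟶ Y'} {g' : Y' ⟶ K'} {h' : E.ses f' g'} {ξ' : NExt E n A' K'}
      (y : Y ⟶ Y') (k : K ⟶ K') (hy₁ : f ≫ y = β ≫ f') (hy₂ : y ≫ g' = g ≫ k)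
      (tail : NExtMor E k α ξ ξ') :
      NExtMor E β α (NExt.step f g h ξ) (NExt.step f' g' h' ξ')

/-- Yoneda equivalence of `n`-extensions: the equivalence relation generated by
morphisms of extensions which are the identity on both end objects. -/
def ExtEquiv (E : ExactStructure C) {n : ℕ} {A B : C} (ξ ξ' : NExt E n A B) : Prop :=
  Relation.EqvGen (fun a b => NExtMor E (𝟙 B) (𝟙 A) a b) ξ ξ'

/-- The trivial `(n+1)`-extension of `A` by the zero object. -/
noncomputable def trivN (E : ExactStructure C) : (n : ℕ) → (A : C) → NExt E (n + 1) A (0 : C)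
  | 0, A => NExt.one (0 : (0 : C) ⟶ A) (𝟙 A) (E.ses_zero_id A)
  | n + 1, A => NExt.step (𝟙 (0 : C)) (0 : (0 : C) ⟶ (0 : C)) (E.ses_id_zero (0 : C)) (trivN E n A)

/-- The trivial (split) `(n+1)`-extension of `A` by `B`. -/
noncomputable def trivExt (E : ExactStructure C) : (n : ℕ) → (A B : C) → NExt E (n + 1) A B
  | 0, A, B => NExt.one (biprod.inl : B ⟶ B ⊞ A) (biprod.snd : B ⊞ A ⟶ A) (E.ses_split B A)
  | n + 1, A, B => NExt.step (𝟙 B) (0 : B ⟶ (0 : C)) (E.ses_id_zero B) (trivN E n A)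

/-- `extVanish E n A B` means `Ext^n_ℰ(A, B) = 0`: every `n`-fold Yoneda extension
of `A` by `B` is Yoneda-equivalent to the trivial one. -/
def extVanish (E : ExactStructure C) : ℕ → C → C → Prop
  | 0, _, _ => True
  | n + 1, A, B => ∀ ξ : NExt E (n + 1) A B, ExtEquiv E ξ (trivExt E n A B)

/-- `MRes E M n X` : there is an exact sequence `0 → M_n → ⋯ → M_1 → X → 0`
with all `M_j ∈ M`. -/
inductive MRes (E : ExactStructure C) (M : Set C) : ℕ → C → Prop
  | iso {X M₀ : C} (hM : M₀ ∈ M) (f : M₀ ⟶ X) (hf : IsIso f) : MRes E M 1 X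
  | step {X K M₀ : C} {n : ℕ} (hM : M₀ ∈ M) (i : K ⟶ M₀) (p : M₀ ⟶ X)
      (hses : E.ses i p) (hK : MRes E M n K) : MRes E M (n + 1) X

/-- `CoRes E M n X` : there is an exact sequence `0 → X → M^1 → ⋯ → M^n → 0`
with all `M^j ∈ M`. -/
inductive CoRes (E : ExactStructure C) (M : Set C) : ℕ → C → Prop
  | iso {X M₀ : C} (hM : M₀ ∈ M) (f : X ⟶ M₀) (hf : IsIso f) : CoRes E M 1 X
  | step {X K M₀ : C} {n : ℕ} (hM : M₀ ∈ M) (i : X ⟶ M₀) (p : M₀ ⟶ K)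
      (hses : E.ses i p) (hK : CoRes E M n K) : CoRes E M (n + 1) X

/-- Right `M`-approximations. -/
def RightApprox {D : Type w} [Category.{w'} D] (M : Set D) {M₀ X : D} (f : M₀ ⟶ X) : Prop :=
  ∀ M' ∈ M, ∀ g : M' ⟶ X, ∃ h : M' ⟶ M₀, h ≫ f = g

/-- Left `M`-approximations. -/
def LeftApprox {D : Type w} [Category.{w'} D] (M : Set D) {X M₀ : D} (f : X ⟶ M₀) : Prop :=
  ∀ M' ∈ M, ∀ g : X ⟶ M', ∃ h : M₀ ⟶ M', f ≫ h = g

/-- `d`-cluster tilting subcategory of an exact category (Definition 4.1). -/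
structure ClusterTiltingExact (E : ExactStructure C) (M : Set C) (d : ℕ) : Prop where
  contra : ∀ X : C, ∃ (M₀ : C) (f : M₀ ⟶ X), M₀ ∈ M ∧ RightApprox M f
  cova : ∀ X : C, ∃ (M₀ : C) (f : X ⟶ M₀), M₀ ∈ M ∧ LeftApprox M f
  gen : ∀ X : C, ∃ (M₀ : C) (f : M₀ ⟶ X), M₀ ∈ M ∧ E.Deflation f
  cogen : ∀ X : C, ∃ (M₀ : C) (f : X ⟶ M₀), M₀ ∈ M ∧ E.Inflation f
  eq_left : M = {X : C | ∀ M' ∈ M, ∀ i : ℕ, 1 ≤ i → i + 1 ≤ d → extVanish E i X M'}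
  eq_right : M = {X : C | ∀ M' ∈ M, ∀ i : ℕ, 1 ≤ i → i + 1 ≤ d → extVanish E i M' X}

/-- `dℤ`-cluster tilting subcategory of an exact category: `d`-cluster tilting and
`Ext^i(ℳ,ℳ) = 0` for `i ∉ dℤ`. -/
def ClusterTiltingExactDZ (E : ExactStructure C) (M : Set C) (d : ℕ) : Prop :=
  ClusterTiltingExact E M d ∧
    ∀ M₀ ∈ M, ∀ M₁ ∈ M, ∀ i : ℕ, 0 < i → ¬ (d ∣ i) → extVanish E i M₀ M₁

end Paper

namespace Paper

variable {C : Type u} [Category.{v} C] [Preadditive C] [HasZeroObject C] [HasBinaryBiproducts C]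

/-- Iterated composition power of an endofunctor. -/
def fpow {D : Type w} [Category.{w'} D] (F : D ⥤ D) : ℕ → D ⥤ D
  | 0 => 𝟭 D
  | n + 1 => fpow F n ⋙ F

/-- An `Ω`-sequence `Ω obj₃ → obj₁ → obj₂ → obj₃`. -/
structure LTTriangle (D : Type w) [Category.{w'} D] (Om : D ⥤ D) where
  obj₁ : D
  obj₂ : D
  obj₃ : D
  m₀ : Om.obj obj₃ ⟶ obj₁
  m₁ : obj₁ ⟶ obj₂
  m₂ : obj₂ ⟶ obj₃

/-- Isomorphism of `Ω`-sequences. -/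
def LTTriangle.IsoSeq {D : Type w} [Category.{w'} D] {Om : D ⥤ D}
    (T T' : LTTriangle D Om) : Prop :=
  ∃ (e₁ : T.obj₁ ≅ T'.obj₁) (e₂ : T.obj₂ ≅ T'.obj₂) (e₃ : T.obj₃ ≅ T'.obj₃),
    T.m₀ ≫ e₁.hom = Om.map e₃.hom ≫ T'.m₀ ∧
    T.m₁ ≫ e₂.hom = e₁.hom ≫ T'.m₁ ∧
    T.m₂ ≫ e₃.hom = e₂.hom ≫ T'.m₂

/-- A left triangulated structure on an additive category with endofunctor `Ω`
(Definition 3.1: axioms (T0)–(T5)). -/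
structure LeftTriangStruct (D : Type w) [Category.{w'} D] [Preadditive D] [HasZeroObject D]
    (Om : D ⥤ D) where
  dist : Set (LTTriangle D Om)
  omAdd : Om.Additive
  iso_closed : ∀ T T' : LTTriangle D Om, T ∈ dist → T.IsoSeq T' → T' ∈ dist
  contractible : ∀ X : D, LTTriangle.mk X X 0 0 (𝟙 X) 0 ∈ dist
  complete : ∀ {B Z : D} (w : B ⟶ Z),
      ∃ (A : D) (u : Om.obj Z ⟶ A) (v : A ⟶ B), LTTriangle.mk A B Z u v w ∈ dist
  rotate : ∀ T ∈ dist,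
      LTTriangle.mk (Om.obj T.obj₃) T.obj₁ T.obj₂ (-Om.map T.m₂) T.m₀ T.m₁ ∈ dist
  complete_mor : ∀ T T' : LTTriangle D Om, T ∈ dist → T' ∈ dist →
      ∀ (g : T.obj₂ ⟶ T'.obj₂) (h : T.obj₃ ⟶ T'.obj₃), T.m₂ ≫ h = g ≫ T'.m₂ →
      ∃ f : T.obj₁ ⟶ T'.obj₁, T.m₁ ≫ g = f ≫ T'.m₁ ∧ T.m₀ ≫ f = Om.map h ≫ T'.m₀
  octa : ∀ {A B Cc D₀ E₀ : D} {u : Om.obj Cc ⟶ A} {v : A ⟶ B} {w : B ⟶ Cc}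
      {f : Om.obj D₀ ⟶ E₀} {g : E₀ ⟶ Cc} {h : Cc ⟶ D₀},
      LTTriangle.mk A B Cc u v w ∈ dist → LTTriangle.mk E₀ Cc D₀ f g h ∈ dist →
      ∃ (F : D) (α : A ⟶ F) (i : Om.obj D₀ ⟶ F) (j : F ⟶ B) (β : F ⟶ E₀),
        LTTriangle.mk F B D₀ i j (w ≫ h) ∈ dist ∧
        LTTriangle.mk A F E₀ (Om.map g ≫ u) α β ∈ dist ∧
        u ≫ α = Om.map h ≫ i ∧ α ≫ j = v ∧ j ≫ w = β ≫ g

/-- A chain (tower) of triangles `Ω Z_{j-1} → Z_j → M_j → Z_{j-1}` with all middle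
terms `M_j` in `X`, used to encode `(d+2)`-angles. -/
inductive LTChain {D : Type w} [Category.{w'} D] [Preadditive D] [HasZeroObject D]
    {Om : D ⥤ D} (L : LeftTriangStruct D Om) (X : Set D) : ℕ → D → D → Prop
  | zero (A : D) : LTChain L X 0 A A
  | succ {n : ℕ} {A B B' M : D} (hc : LTChain L X n A B) (hM : M ∈ X)
      (u : Om.obj B ⟶ B') (v : B' ⟶ M) (w : M ⟶ B)
      (ht : LTTriangle.mk B' M B u v w ∈ L.dist) : LTChain L X (n + 1) A B'

/-- `d`-cluster tilting subcategory of a left triangulated category (Definition 5.1). -/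
structure ClusterTiltingLT {D : Type w} [Category.{w'} D] [Preadditive D] [HasZeroObject D]
    {Om : D ⥤ D} (L : LeftTriangStruct D Om) (X : Set D) (d : ℕ) : Prop where
  summand_closed : ∀ {A Z : D}, Z ∈ X → ∀ (s : A ⟶ Z) (r : Z ⟶ A), s ≫ r = 𝟙 A → A ∈ X
  /-- every object admits a `(d+2)`-angle `0 → C → X¹ → ⋯ → X^d → 0` with `Xⁱ ∈ X` -/
  cores : ∀ Cobj : D, ∃ Z₀ : D, IsZero Z₀ ∧ LTChain L X d Z₀ Cobj
  /-- every object admits a `(d+2)`-angle `0 → X_d → ⋯ → X_1 → C → 0` with `X_i ∈ X` -/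
  res : ∀ Cobj : D, ∃ (Z₀ Z₁ W : D) (u : Om.obj Z₀ ⟶ Z₁) (v : Z₁ ⟶ Cobj) (w : Cobj ⟶ Z₀),
      IsZero Z₀ ∧ LTTriangle.mk Z₁ Cobj Z₀ u v w ∈ L.dist ∧
      LTChain L X (d - 1) Z₁ W ∧ W ∈ X
  om_bij : ∀ (Cobj X₀ : D), X₀ ∈ X → ∀ i : ℕ, i + 2 ≤ d →
      Function.Bijective (fun f : (fpow Om i).obj X₀ ⟶ Cobj => Om.map f)
  hom_vanish : ∀ (X₀ X₁ : D), X₀ ∈ X → X₁ ∈ X → ∀ i : ℕ, 1 ≤ i → i + 1 ≤ d →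
      ∀ f : (fpow Om i).obj X₁ ⟶ X₀, f = 0

/-- `dℤ`-cluster tilting subcategory of a left triangulated category:
`d`-cluster tilting and `Ω^d(X) ⊆ X`. -/
def ClusterTiltingLTDZ {D : Type w} [Category.{w'} D] [Preadditive D] [HasZeroObject D]
    {Om : D ⥤ D} (L : LeftTriangStruct D Om) (X : Set D) (d : ℕ) : Prop :=
  ClusterTiltingLT L X d ∧ ∀ A ∈ X, (fpow Om d).obj A ∈ X

/-- A triangle `X → Y → Z → ΣX` for a suspension endofunctor. -/
structure Tri (T : Type w) [Category.{w'} T] (Sf : T ⥤ T) where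
  obj₁ : T
  obj₂ : T
  obj₃ : T
  m₁ : obj₁ ⟶ obj₂
  m₂ : obj₂ ⟶ obj₃
  m₃ : obj₃ ⟶ Sf.obj obj₁

/-- Isomorphism of candidate triangles. -/
def Tri.IsoTri {T : Type w} [Category.{w'} T] {Sf : T ⥤ T} (T₁ T₂ : Tri T Sf) : Prop :=
  ∃ (e₁ : T₁.obj₁ ≅ T₂.obj₁) (e₂ : T₁.obj₂ ≅ T₂.obj₂) (e₃ : T₁.obj₃ ≅ T₂.obj₃),
    T₁.m₁ ≫ e₂.hom = e₁.hom ≫ T₂.m₁ ∧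
    T₁.m₂ ≫ e₃.hom = e₂.hom ≫ T₂.m₂ ∧
    T₁.m₃ ≫ Sf.map e₁.hom = e₃.hom ≫ T₂.m₃

/-- `dist` is a triangulated structure on `T` with suspension the equivalence `Se`
(the classical Verdier axioms TR0–TR4). -/
structure TriangStructOn (T : Type w) [Category.{w'} T] [Preadditive T] [HasZeroObject T]
    (Se : T ≌ T) (dist : Set (Tri T Se.functor)) : Prop where
  iso_closed : ∀ T₁ T₂ : Tri T Se.functor, T₁ ∈ dist → T₁.IsoTri T₂ → T₂ ∈ dist
  id_tri : ∀ X : T, Tri.mk X X 0 (𝟙 X) 0 0 ∈ dist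
  complete : ∀ {X Y : T} (f : X ⟶ Y),
      ∃ (Z : T) (g : Y ⟶ Z) (h : Z ⟶ Se.functor.obj X), Tri.mk X Y Z f g h ∈ dist
  rotate : ∀ T₁ ∈ dist,
      Tri.mk T₁.obj₂ T₁.obj₃ (Se.functor.obj T₁.obj₁) T₁.m₂ T₁.m₃ (-(Se.functor.map T₁.m₁)) ∈ dist
  unrotate : ∀ {X Y Z : T} (f : X ⟶ Y) (g : Y ⟶ Z) (h : Z ⟶ Se.functor.obj X),
      Tri.mk Y Z (Se.functor.obj X) g h (-(Se.functor.map f)) ∈ dist →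
      Tri.mk X Y Z f g h ∈ dist
  complete_mor : ∀ T₁ T₂ : Tri T Se.functor, T₁ ∈ dist → T₂ ∈ dist →
      ∀ (a : T₁.obj₁ ⟶ T₂.obj₁) (b : T₁.obj₂ ⟶ T₂.obj₂), T₁.m₁ ≫ b = a ≫ T₂.m₁ →
      ∃ c : T₁.obj₃ ⟶ T₂.obj₃, T₁.m₂ ≫ c = b ≫ T₂.m₂ ∧ T₁.m₃ ≫ Se.functor.map a = c ≫ T₂.m₃
  octa : ∀ {X Y Z U V W : T} (u : X ⟶ Y) (v : Y ⟶ Z) (a : Y ⟶ U) (a' : U ⟶ Se.functor.obj X)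
      (b : Z ⟶ V) (b' : V ⟶ Se.functor.obj Y) (c : Z ⟶ W) (c' : W ⟶ Se.functor.obj X),
      Tri.mk X Y U u a a' ∈ dist → Tri.mk Y Z V v b b' ∈ dist →
      Tri.mk X Z W (u ≫ v) c c' ∈ dist →
      ∃ (f₁ : U ⟶ W) (f₂ : W ⟶ V),
        Tri.mk U W V f₁ f₂ (b' ≫ Se.functor.map a) ∈ dist ∧
        a ≫ f₁ = v ≫ c ∧ f₁ ≫ c' = a' ∧ c ≫ f₂ = b ∧ f₂ ≫ b' = c' ≫ Se.functor.map u

/-- `d`-cluster tilting subcategory of a category with suspension functor `Sf`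
(the triangulated-sense definition, Definition 4.1 with `Ext^i(X,Y) = Hom(X, Σ^i Y)`). -/
structure ClusterTiltingTri (T : Type w) [Category.{w'} T] [Preadditive T]
    (Sf : T ⥤ T) (M : Set T) (d : ℕ) : Prop where
  contra : ∀ X : T, ∃ (M₀ : T) (f : M₀ ⟶ X), M₀ ∈ M ∧ RightApprox M f
  cova : ∀ X : T, ∃ (M₀ : T) (f : X ⟶ M₀), M₀ ∈ M ∧ LeftApprox M f
  eq_left : M = {Eo : T | ∀ M' ∈ M, ∀ i : ℕ, 1 ≤ i → i + 1 ≤ d →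
      ∀ f : Eo ⟶ (fpow Sf i).obj M', f = 0}
  eq_right : M = {Eo : T | ∀ M' ∈ M, ∀ i : ℕ, 1 ≤ i → i + 1 ≤ d →
      ∀ f : M' ⟶ (fpow Sf i).obj Eo, f = 0}

/-- `dℤ`-cluster tilting subcategory in the triangulated sense:
`d`-cluster tilting and `Σ^d(M) ⊆ M`. -/
def ClusterTiltingTriDZ (T : Type w) [Category.{w'} T] [Preadditive T]
    (Sf : T ⥤ T) (M : Set T) (d : ℕ) : Prop :=
  ClusterTiltingTri T Sf M d ∧ ∀ A ∈ M, (fpow Sf d).obj A ∈ M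

/-- Integer powers of an auto-equivalence. -/
def zpow {T : Type w} [Category.{w'} T] (Se : T ≌ T) : ℤ → T ⥤ T
  | Int.ofNat n => fpow Se.functor n
  | Int.negSucc n => fpow Se.inverse (n + 1)

end Paper

namespace Paper

variable {C : Type u} [Category.{v} C] [Preadditive C] [HasZeroObject C] [HasBinaryBiproducts C]

/-- Raising a morphism `Ω^a X ⟶ Ω^b Y` by applying `F` `j` more times. -/
def raiseN {D : Type w} [Category.{w'} D] (F : D ⥤ D) :
    ∀ (j : ℕ) {X Y : D} {a b : ℕ},
      ((fpow F a).obj X ⟶ (fpow F b).obj Y) → ((fpow F (a + j)).obj X ⟶ (fpow F (b + j)).obj Y)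
  | 0, _, _, _, _, f => f
  | j + 1, _, _, _, _, f => F.map (raiseN F j f)

/-- `S` is (a realization of) the stabilization `ℤD` of the category `D` with respect
to the endofunctor `F`: objects are pairs `(X, n)`, `X ∈ D`, `n ∈ ℤ`, and
`Hom((X,m),(Y,n)) = colim_k Hom(F^{m+k} X, F^{n+k} Y)`.  The data consists of the
objects `obj X n` together with the structure maps `lift` into the colimit, and the
axioms say exactly that the hom groups are the filtered colimits above and that every
object of `S` is isomorphic to some `(X, n)`. -/
structure IsStabilization {D : Type u'} [Category.{v'} D] [Preadditive D] (F : D ⥤ D)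
    (S : Type w) [Category.{w'} S] [Preadditive S] where
  obj : D → ℤ → S
  lift : ∀ {X Y : D} (a b : ℕ) (m n : ℤ), (a : ℤ) + n = (b : ℤ) + m →
      (((fpow F a).obj X) ⟶ ((fpow F b).obj Y)) → (obj X m ⟶ obj Y n)
  lift_raise : ∀ {X Y : D} (a b : ℕ) (m n : ℤ) (h : (a : ℤ) + n = (b : ℤ) + m)
      (h' : ((a + 1 : ℕ) : ℤ) + n = ((b + 1 : ℕ) : ℤ) + m)
      (f : (fpow F a).obj X ⟶ (fpow F b).obj Y),
      lift (a + 1) (b + 1) m n h' (F.map f) = lift a b m n h f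
  lift_id : ∀ {X : D} (a : ℕ) (n : ℤ) (h : (a : ℤ) + n = (a : ℤ) + n),
      lift a a n n h (𝟙 ((fpow F a).obj X)) = 𝟙 (obj X n)
  lift_comp : ∀ {X Y Z : D} (a b c : ℕ) (m n p : ℤ)
      (hab : (a : ℤ) + n = (b : ℤ) + m) (hbc : (b : ℤ) + p = (c : ℤ) + n)
      (hac : (a : ℤ) + p = (c : ℤ) + m)
      (f : (fpow F a).obj X ⟶ (fpow F b).obj Y) (g : (fpow F b).obj Y ⟶ (fpow F c).obj Z),
      lift a b m n hab f ≫ lift b c n p hbc g = lift a c m p hac (f ≫ g)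
  lift_add : ∀ {X Y : D} (a b : ℕ) (m n : ℤ) (h : (a : ℤ) + n = (b : ℤ) + m)
      (f g : (fpow F a).obj X ⟶ (fpow F b).obj Y),
      lift a b m n h (f + g) = lift a b m n h f + lift a b m n h g
  lift_surj : ∀ {X Y : D} {m n : ℤ} (φ : obj X m ⟶ obj Y n),
      ∃ (a b : ℕ) (h : (a : ℤ) + n = (b : ℤ) + m) (f : (fpow F a).obj X ⟶ (fpow F b).obj Y),
        φ = lift a b m n h f
  lift_inj : ∀ {X Y : D} (a b a' b' : ℕ) (m n : ℤ)
      (h : (a : ℤ) + n = (b : ℤ) + m) (h' : (a' : ℤ) + n = (b' : ℤ) + m)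
      (f : (fpow F a).obj X ⟶ (fpow F b).obj Y)
      (f' : (fpow F a').obj X ⟶ (fpow F b').obj Y),
      lift a b m n h f = lift a' b' m n h' f' →
      ∃ (j j' : ℕ), a + j = a' + j' ∧ b + j = b' + j' ∧
        HEq (raiseN F j f) (raiseN F j' f')
  dense : ∀ s : S, ∃ (X : D) (n : ℤ), Nonempty (s ≅ obj X n)

/-- The subcategory `dℤ𝒳` of the stabilization: all objects isomorphic to some
`(X, dk)` with `X ∈ 𝒳`, `k ∈ ℤ`. -/
def dZSet {D : Type u'} [Category.{v'} D] [Preadditive D] {F : D ⥤ D}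
    {S : Type w} [Category.{w'} S] [Preadditive S] (st : IsStabilization F S)
    (X : Set D) (d : ℕ) : Set S :=
  {s | ∃ (A : D) (k : ℤ), A ∈ X ∧ Nonempty (s ≅ st.obj A ((d : ℤ) * k))}

/-- The standard triangles of the stabilization of a left triangulated category:
those induced by a sequence in `D` whose sign-twist by `(-1)^k` is a triangle. -/
def stdTriangles {D : Type u'} [Category.{v'} D] [Preadditive D] [HasZeroObject D]
    {Om : D ⥤ D} (L : LeftTriangStruct D Om)
    {S : Type w} [Category.{w'} S] [Preadditive S] (st : IsStabilization Om S)
    (Se : S ≌ S) (σ : ∀ (A : D) (n : ℤ), Se.functor.obj (st.obj A n) ≅ st.obj A (n - 1)) :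
    Set (Tri S Se.functor) :=
  {T | ∃ (C₁ C₂ C₃ : D) (n₁ n₂ n₃ k : ℤ) (a₁ a₂ a₃ : ℕ),
    (a₁ : ℤ) = n₁ + k ∧ (a₂ : ℤ) = n₂ + k ∧ (a₃ : ℤ) = n₃ + k ∧
    ∃ (u : (fpow Om (a₁ + 1)).obj C₁ ⟶ (fpow Om a₃).obj C₃)
      (v : (fpow Om a₃).obj C₃ ⟶ (fpow Om a₂).obj C₂)
      (w : (fpow Om a₂).obj C₂ ⟶ (fpow Om a₁).obj C₁)
      (h₁ : (a₃ : ℤ) + n₂ = (a₂ : ℤ) + n₃) (h₂ : (a₂ : ℤ) + n₁ = (a₁ : ℤ) + n₂)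
      (h₃ : ((a₁ + 1 : ℕ) : ℤ) + (n₃ - 1) = (a₃ : ℤ) + n₁),
      LTTriangle.mk ((fpow Om a₃).obj C₃) ((fpow Om a₂).obj C₂) ((fpow Om a₁).obj C₁)
        (((k.negOnePow : ℤˣ) : ℤ) • u) (((k.negOnePow : ℤˣ) : ℤ) • v)
        (((k.negOnePow : ℤˣ) : ℤ) • w) ∈ L.dist ∧
      T = Tri.mk (st.obj C₃ n₃) (st.obj C₂ n₂) (st.obj C₁ n₁)
            (st.lift a₃ a₂ n₃ n₂ h₁ v) (st.lift a₂ a₁ n₂ n₁ h₂ w)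
            (st.lift (a₁ + 1) a₃ n₁ (n₃ - 1) h₃ u ≫ (σ C₃ n₃).inv)}

/-- The syzygy functor `Ω` on the stable category, together with its defining data:
for each object a chosen conflation `0 → K X → P X → X → 0` with `P X` projective,
identifications `Ω(X̲) ≅ K X`, and the characterization of `Ω` on morphisms by
lifting along these conflations. -/
structure SyzygyFunctor (E : ExactStructure C) where
  Om : St E ⥤ St E
  P : C → C
  projP : ∀ X : C, E.Proj (P X)
  K : C → C
  i : ∀ X : C, K X ⟶ P X
  p : ∀ X : C, P X ⟶ X
  sesX : ∀ X : C, E.ses (i X) (p X)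
  iso : ∀ X : C, Om.obj ((stq E).obj X) ≅ (stq E).obj (K X)
  map_spec : ∀ {X Y : C} (f : X ⟶ Y) (g : P X ⟶ P Y) (k : K X ⟶ K Y),
      g ≫ p Y = p X ≫ f → i X ≫ g = k ≫ i Y →
      Om.map ((stq E).map f) = (iso X).hom ≫ (stq E).map k ≫ (iso Y).inv

/-- The standard triangles of the stable category of an exact category with enough
projectives (Theorem 3.2): `Ω E₁ → E₃ → E₂ → E₁` induced by a conflation
`0 → E₃ → E₂ → E₁ → 0` and a lift of diagrams against `0 → K E₁ → P E₁ → E₁ → 0`. -/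
def stdStableTriangles (E : ExactStructure C) (SF : SyzygyFunctor E) :
    Set (LTTriangle (St E) SF.Om) :=
  {T | ∃ (E₁ E₂ E₃ : C) (v : E₃ ⟶ E₂) (w : E₂ ⟶ E₁) (_ : E.ses v w)
      (u : SF.K E₁ ⟶ E₃) (g : SF.P E₁ ⟶ E₂),
      SF.i E₁ ≫ g = u ≫ v ∧ g ≫ w = SF.p E₁ ∧
      (LTTriangle.mk ((stq E).obj E₃) ((stq E).obj E₂) ((stq E).obj E₁)
        ((SF.iso E₁).hom ≫ (stq E).map u) ((stq E).map v) ((stq E).map w)).IsoSeq T}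

/-- Gorenstein projective objects: cycles of totally acyclic complexes of projectives.
The totally acyclic complex is encoded by its sequence of conflations
`0 → G_i → P_i → G_{i-1} → 0` with `P_i` projective, together with the condition that
each map `G_i → Q` to a projective extends to `P_i` (i.e. `Hom(P_•, Q)` is acyclic). -/
def GorensteinProj (E : ExactStructure C) (G : C) : Prop :=
  ∃ (Gs Ps : ℤ → C) (g : ∀ i : ℤ, Gs i ⟶ Ps i) (p : ∀ i : ℤ, Ps i ⟶ Gs (i - 1)),
    Gs 0 = G ∧ ∀ i : ℤ, E.Proj (Ps i) ∧ E.ses (g i) (p i) ∧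
      (∀ Q : C, E.Proj Q → ∀ f : Gs i ⟶ Q, ∃ h : Ps i ⟶ Q, g i ≫ h = f)

/-- `Syz E n X W` : `W` is an `n`-th syzygy of `X`, i.e. there is a chain of
conflations `0 → K_{j+1} → P_j → K_j → 0` with each `P_j` projective, `K_0 = X`,
`K_n = W`. -/
inductive Syz (E : ExactStructure C) : ℕ → C → C → Prop
  | zero (X : C) : Syz E 0 X X
  | succ {n : ℕ} {X K W P : C} (h : Syz E n X K) (hP : E.Proj P) (w : W ⟶ P) (p : P ⟶ K)
      (hs : E.ses w p) : Syz E (n + 1) X W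

/-- `X` has finite Gorenstein projective dimension: some syzygy `Ω^n(X̲)` is
(stably isomorphic to) a Gorenstein projective object. -/
def FiniteGPdim (E : ExactStructure C) (X : C) : Prop :=
  ∃ (n : ℕ) (W G : C), Syz E n X W ∧ GorensteinProj E G ∧
    Nonempty ((stq E).obj W ≅ (stq E).obj G)

end Paper

namespace Paper

section AuxGeneric

variable {T : Type w} [Category.{w'} T]

lemma fpow_add_obj (F : T ⥤ T) (x : ℕ) : ∀ (y : ℕ) (A : T),
    (fpow F (x + y)).obj A = (fpow F y).obj ((fpow F x).obj A)
  | 0, _ => rfl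
  | y + 1, A => congrArg F.obj (fpow_add_obj F x y A)

lemma fpow_swap_obj (F : T ⥤ T) : ∀ (t : ℕ) (V : T),
    (fpow F t).obj (F.obj V) = (fpow F (t + 1)).obj V
  | 0, _ => rfl
  | t + 1, V => congrArg F.obj (fpow_swap_obj F t V)

lemma raiseN_id (F : T ⥤ T) : ∀ (j : ℕ) {A : T} (a : ℕ),
    raiseN F j (𝟙 ((fpow F a).obj A)) = 𝟙 ((fpow F (a + j)).obj A)
  | 0, _, _ => rfl
  | j + 1, A, a => by
      show F.map (raiseN F j (𝟙 ((fpow F a).obj A))) = _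
      rw [raiseN_id F j a, F.map_id]
      exact rfl

lemma raiseN_comp (F : T ⥤ T) : ∀ (j : ℕ) {A B C : T} {a b c : ℕ}
    (f : (fpow F a).obj A ⟶ (fpow F b).obj B) (g : (fpow F b).obj B ⟶ (fpow F c).obj C),
    raiseN F j (f ≫ g) = raiseN F j f ≫ raiseN F j g
  | 0, _, _, _, _, _, _, _, _ => rfl
  | j + 1, A, B, C, a, b, c, f, g => by
      show F.map (raiseN F j (f ≫ g)) = F.map (raiseN F j f) ≫ F.map (raiseN F j g)
      rw [raiseN_comp F j f g, F.map_comp]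

end AuxGeneric

section AuxStab

variable {D : Type u} [Category.{v} D] [Preadditive D] [HasZeroObject D] {Om : D ⥤ D}
variable {S : Type w} [Category.{w'} S] [Preadditive S] [HasZeroObject S]

lemma lift_zero' (st : IsStabilization Om S) {A B : D} (a b : ℕ) (m n : ℤ)
    (h : (a : ℤ) + n = (b : ℤ) + m) :
    st.lift a b m n h (0 : (fpow Om a).obj A ⟶ (fpow Om b).obj B) = 0 := by
  have h0 := st.lift_add a b m n h (0 : (fpow Om a).obj A ⟶ (fpow Om b).obj B) 0
  rw [add_zero] at h0
  exact right_eq_add.mp h0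

lemma lift_raiseN (st : IsStabilization Om S) {A B : D} (a b : ℕ) (m n : ℤ)
    (h : (a : ℤ) + n = (b : ℤ) + m) (f : (fpow Om a).obj A ⟶ (fpow Om b).obj B) :
    ∀ (j : ℕ) (h' : ((a + j : ℕ) : ℤ) + n = ((b + j : ℕ) : ℤ) + m),
      st.lift (a + j) (b + j) m n h' (raiseN Om j f) = st.lift a b m n h f
  | 0, _ => rfl
  | j + 1, h' => by
      have h'' : ((a + j : ℕ) : ℤ) + n = ((b + j : ℕ) : ℤ) + m := by push_cast; push_cast at h; omega
      exact (st.lift_raise (a + j) (b + j) m n h'' h' (raiseN Om j f)).trans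
        (lift_raiseN st a b m n h f j h'')

lemma lift_reindex (st : IsStabilization Om S) {A B : D} {a a' b b' : ℕ}
    (ha : a = a') (hb : b = b') (m n : ℤ)
    (h : (a : ℤ) + n = (b : ℤ) + m) (h' : (a' : ℤ) + n = (b' : ℤ) + m)
    (f : (fpow Om a).obj A ⟶ (fpow Om b).obj B) :
    st.lift a b m n h f
      = st.lift a' b' m n h' (eqToHom (by rw [ha]) ≫ f ≫ eqToHom (by rw [hb])) := by
  subst ha; subst hb; simp

noncomputable def stShiftIso (st : IsStabilization Om S) (C : D) (n : ℤ) (a : ℕ) :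
    st.obj C n ≅ st.obj ((fpow Om a).obj C) (n - a) where
  hom := st.lift a 0 n (n - a) (by push_cast; ring) (𝟙 ((fpow Om a).obj C))
  inv := st.lift 0 a (n - a) n (by push_cast; ring) (𝟙 ((fpow Om a).obj C))
  hom_inv_id := by
    rw [st.lift_comp a 0 a n (n - a) n (by push_cast; ring) (by push_cast; ring) rfl
      (𝟙 ((fpow Om a).obj C)) (𝟙 ((fpow Om a).obj C))]
    exact (congrArg (st.lift a a n n rfl) (Category.id_comp _)).trans (st.lift_id a n rfl)
  inv_hom_id := by
    rw [st.lift_comp 0 a 0 (n - a) n (n - a) (by push_cast; ring) (by push_cast; ring) rfl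
      (𝟙 ((fpow Om a).obj C)) (𝟙 ((fpow Om a).obj C))]
    exact (congrArg (st.lift 0 0 (n - a) (n - a) rfl) (Category.id_comp _)).trans
      (st.lift_id 0 (n - a) rfl)

noncomputable def stCast (st : IsStabilization Om S) (A : D) {m m' : ℤ} (h : m = m') :
    st.obj A m ≅ st.obj A m' := eqToIso (by rw [h])

noncomputable def sigNIso (st : IsStabilization Om S) (Se : S ≌ S)
    (σ : ∀ (A : D) (n : ℤ), Se.functor.obj (st.obj A n) ≅ st.obj A (n - 1)) (A : D) (n : ℤ) :
    ∀ t : ℕ, (fpow Se.functor t).obj (st.obj A n) ≅ st.obj A (n - t)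
  | 0 => stCast st A (by simp)
  | t + 1 => Se.functor.mapIso (sigNIso st Se σ A n t) ≪≫ σ A (n - t)
      ≪≫ stCast st A (by push_cast; ring)

lemma st_isZero (st : IsStabilization Om S) {A : D} (hA : IsZero A) (n : ℤ) :
    IsZero (st.obj A n) := by
  rw [IsZero.iff_id_eq_zero]
  have h1 : 𝟙 (st.obj A n) = st.lift 0 0 n n rfl (𝟙 ((fpow Om 0).obj A)) :=
    (st.lift_id 0 n rfl).symm
  rw [h1, hA.eq_of_src (𝟙 ((fpow Om 0).obj A) : A ⟶ A) 0]
  exact lift_zero' st 0 0 n n rfl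

lemma sig_isZero (Se : S ≌ S) {Z : S} (hZ : IsZero Z) : IsZero (Se.functor.obj Z) := by
  constructor
  · intro Y
    obtain ⟨u⟩ := hZ.unique_to (Se.inverse.obj Y)
    exact ⟨@Equiv.unique _ _ u (Se.toAdjunction.homEquiv Z Y)⟩
  · intro Y
    obtain ⟨u⟩ := hZ.unique_from (Se.inverse.obj Y)
    exact ⟨@Equiv.unique _ _ u (Se.symm.toAdjunction.homEquiv Y Z).symm⟩

lemma sig_map_zero (Se : S ≌ S) (P Q : S) : Se.functor.map (0 : P ⟶ Q) = 0 := by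
  have h0 : (0 : P ⟶ Q) = (0 : P ⟶ (0 : S)) ≫ (0 : (0 : S) ⟶ Q) := by simp
  rw [h0, Functor.map_comp,
    (sig_isZero Se (isZero_zero S)).eq_of_tgt (Se.functor.map (0 : P ⟶ (0 : S))) 0, zero_comp]

lemma conj_zero {V W V' W' : S} (e₁ : V ≅ V') (e₂ : W ≅ W') (hv : ∀ ψ : V' ⟶ W', ψ = 0) :
    ∀ φ : V ⟶ W, φ = 0 := by
  intro φ
  have h := hv (e₁.inv ≫ φ ≫ e₂.hom)
  calc φ = e₁.hom ≫ (e₁.inv ≫ φ ≫ e₂.hom) ≫ e₂.inv := by simp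
  _ = 0 := by rw [h]; simp

end AuxStab

end Paper

namespace Paper

section AuxTri

variable {D : Type u} [Category.{v} D] [Preadditive D] [HasZeroObject D] {Om : D ⥤ D}
variable {S : Type w} [Category.{w'} S] [Preadditive S] [HasZeroObject S]

variable (Om) in
def towM0 (T : LTTriangle D Om) : ∀ a : ℕ, Om.obj ((fpow Om a).obj T.obj₃) ⟶ (fpow Om a).obj T.obj₁
  | 0 => T.m₀
  | a + 1 => -Om.map (towM0 T a)

variable (Om) in
def towM1 (T : LTTriangle D Om) : ∀ a : ℕ, (fpow Om a).obj T.obj₁ ⟶ (fpow Om a).obj T.obj₂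
  | 0 => T.m₁
  | a + 1 => -Om.map (towM1 T a)

variable (Om) in
def towM2 (T : LTTriangle D Om) : ∀ a : ℕ, (fpow Om a).obj T.obj₂ ⟶ (fpow Om a).obj T.obj₃
  | 0 => T.m₂
  | a + 1 => -Om.map (towM2 T a)

lemma tower_dist (L : LeftTriangStruct D Om) {T : LTTriangle D Om} (hT : T ∈ L.dist) :
    ∀ a : ℕ, LTTriangle.mk ((fpow Om a).obj T.obj₁) ((fpow Om a).obj T.obj₂)
      ((fpow Om a).obj T.obj₃) (towM0 Om T a) (towM1 Om T a) (towM2 Om T a) ∈ L.dist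
  | 0 => hT
  | a + 1 => L.rotate _ (L.rotate _ (L.rotate _ (tower_dist L hT a)))

lemma stdTriAt (L : LeftTriangStruct D Om) (st : IsStabilization Om S) (Se : S ≌ S)
    (σ : ∀ (A : D) (n : ℤ), Se.functor.obj (st.obj A n) ≅ st.obj A (n - 1))
    {T : LTTriangle D Om} (hT : T ∈ L.dist) (n : ℤ) :
    ∃ (μ₁ : st.obj T.obj₁ n ⟶ st.obj T.obj₂ n) (μ₂ : st.obj T.obj₂ n ⟶ st.obj T.obj₃ n)
      (μ₃ : st.obj T.obj₃ n ⟶ Se.functor.obj (st.obj T.obj₁ n)),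
      Tri.mk (st.obj T.obj₁ n) (st.obj T.obj₂ n) (st.obj T.obj₃ n) μ₁ μ₂ μ₃
        ∈ stdTriangles L st Se σ := by
  have hnk : (0 : ℤ) ≤ n + 2 * ((n.natAbs : ℤ) + 1) := by omega
  set a : ℕ := (n + 2 * ((n.natAbs : ℤ) + 1)).toNat with ha
  have haZ : (a : ℤ) = n + 2 * ((n.natAbs : ℤ) + 1) := Int.toNat_of_nonneg hnk
  refine ⟨st.lift a a n n rfl (towM1 Om T a), st.lift a a n n rfl (towM2 Om T a),
    st.lift (a + 1) a n (n - 1) (by push_cast; ring) (towM0 Om T a) ≫ (σ T.obj₁ n).inv,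
    T.obj₃, T.obj₂, T.obj₁, n, n, n, 2 * ((n.natAbs : ℤ) + 1), a, a, a, haZ, haZ, haZ,
    towM0 Om T a, towM1 Om T a, towM2 Om T a, rfl, rfl, by push_cast; ring, ?_, rfl⟩
  rw [Int.negOnePow_two_mul]
  simp only [Units.val_one, one_smul]
  convert tower_dist L hT a using 2
  exact congrArg (fun x => LTTriangle.mk _ _ _ x _ _) (one_zsmul (towM0 Om T a))

def susM1 (Sf : S ⥤ S) (T : Tri S Sf) : ∀ s : ℕ, (fpow Sf s).obj T.obj₁ ⟶ (fpow Sf s).obj T.obj₂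
  | 0 => T.m₁
  | s + 1 => -Sf.map (susM1 Sf T s)

def susM2 (Sf : S ⥤ S) (T : Tri S Sf) : ∀ s : ℕ, (fpow Sf s).obj T.obj₂ ⟶ (fpow Sf s).obj T.obj₃
  | 0 => T.m₂
  | s + 1 => -Sf.map (susM2 Sf T s)

def susM3 (Sf : S ⥤ S) (T : Tri S Sf) :
    ∀ s : ℕ, (fpow Sf s).obj T.obj₃ ⟶ Sf.obj ((fpow Sf s).obj T.obj₁)
  | 0 => T.m₃
  | s + 1 => -Sf.map (susM3 Sf T s)

section TS

variable (Se : S ≌ S) {dist : Set (Tri S Se.functor)} (hTS : TriangStructOn S Se dist)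

include hTS

lemma susp_dist {T : Tri S Se.functor} (hT : T ∈ dist) :
    ∀ s : ℕ, Tri.mk ((fpow Se.functor s).obj T.obj₁) ((fpow Se.functor s).obj T.obj₂)
      ((fpow Se.functor s).obj T.obj₃) (susM1 Se.functor T s) (susM2 Se.functor T s)
      (susM3 Se.functor T s) ∈ dist
  | 0 => hT
  | s + 1 => hTS.rotate _ (hTS.rotate _ (hTS.rotate _ (susp_dist hT s)))

lemma tri_liftLemma {T : Tri S Se.functor} (hT : T ∈ dist)
    {W : S} (g : W ⟶ T.obj₂) (hg : g ≫ T.m₂ = 0) : ∃ h : W ⟶ T.obj₁, h ≫ T.m₁ = g := by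
  have hW1 : Tri.mk W (0 : S) (Se.functor.obj W) (0 : W ⟶ (0 : S)) (0 : (0 : S) ⟶ _)
      (-(Se.functor.map (𝟙 W))) ∈ dist := hTS.rotate _ (hTS.id_tri W)
  obtain ⟨c, _hc1, hc2⟩ := hTS.complete_mor _ _ hW1 (hTS.rotate _ hT) g (0 : (0 : S) ⟶ T.obj₃)
    (by simp [hg])
  have hc2' : Se.functor.map g = c ≫ Se.functor.map T.m₁ := by
    have h6 := hc2
    rw [show ((Tri.mk W (0 : S) (Se.functor.obj W) (0 : W ⟶ (0 : S)) (0 : (0 : S) ⟶ _)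
        (-(Se.functor.map (𝟙 W)))).m₃) = -(Se.functor.map (𝟙 W)) from rfl,
      CategoryTheory.Functor.map_id, Preadditive.neg_comp, Category.id_comp] at h6
    rw [show ((Tri.mk T.obj₂ T.obj₃ (Se.functor.obj T.obj₁) T.m₂ T.m₃
        (-(Se.functor.map T.m₁))).m₃) = -(Se.functor.map T.m₁) from rfl,
      Preadditive.comp_neg] at h6
    exact neg_inj.mp h6
  refine ⟨Se.fullyFaithfulFunctor.preimage c, Se.fullyFaithfulFunctor.map_injective ?_⟩
  rw [Functor.map_comp, Functor.FullyFaithful.map_preimage, ← hc2']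

lemma tri_lift3 {T : Tri S Se.functor} (hT : T ∈ dist)
    {W : S} (g : W ⟶ T.obj₃) (hg : g ≫ T.m₃ = 0) : ∃ h : W ⟶ T.obj₂, h ≫ T.m₂ = g :=
  tri_liftLemma Se hTS (hTS.rotate _ hT) g hg

lemma zww_dist (W : S) : Tri.mk (0 : S) W W 0 (𝟙 W) 0 ∈ dist := by
  apply hTS.unrotate (0 : (0 : S) ⟶ W) (𝟙 W) (0 : W ⟶ Se.functor.obj (0 : S))
  apply hTS.iso_closed _ _ (hTS.id_tri W)
  refine ⟨Iso.refl W, Iso.refl W, (isZero_zero S).iso (sig_isZero Se (isZero_zero S)), by simp,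
    by simp, ?_⟩
  rw [(sig_isZero Se (isZero_zero S)).eq_of_src (-(Se.functor.map (0 : (0 : S) ⟶ W))) 0]
  simp

lemma tri_ext {T : Tri S Se.functor} (hT : T ∈ dist)
    {W : S} (g : T.obj₂ ⟶ W) (hg : T.m₁ ≫ g = 0) : ∃ h : T.obj₃ ⟶ W, T.m₂ ≫ h = g := by
  obtain ⟨c, hc1, _⟩ := hTS.complete_mor T _ hT (zww_dist Se hTS W) (0 : T.obj₁ ⟶ (0 : S)) g
    (by simpa using hg)
  exact ⟨c, by simpa using hc1⟩

lemma ext_along_m1 {T : Tri S Se.functor} (hT : T ∈ dist) {V : S} (g : T.obj₁ ⟶ V)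
    (hcond : T.m₃ ≫ Se.functor.map g = 0) : ∃ h : T.obj₂ ⟶ V, T.m₁ ≫ h = g := by
  obtain ⟨h', hh'⟩ := tri_ext Se hTS (hTS.rotate _ (hTS.rotate _ hT)) (Se.functor.map g)
    (by simpa using hcond)
  refine ⟨Se.fullyFaithfulFunctor.preimage (-h'), Se.fullyFaithfulFunctor.map_injective ?_⟩
  rw [Functor.map_comp, Functor.FullyFaithful.map_preimage, Preadditive.comp_neg, ← Preadditive.neg_comp]
  exact hh'

lemma tri_iso_of_zero3 {T : Tri S Se.functor} (hT : T ∈ dist) (h3 : IsZero T.obj₃) :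
    ∃ r : T.obj₂ ⟶ T.obj₁, T.m₁ ≫ r = 𝟙 T.obj₁ ∧ r ≫ T.m₁ = 𝟙 T.obj₂ := by
  obtain ⟨r, hr⟩ := tri_liftLemma Se hTS hT (𝟙 T.obj₂)
    (by rw [Category.id_comp, h3.eq_of_tgt T.m₂ 0])
  refine ⟨r, ?_, hr⟩
  have he : (𝟙 T.obj₁ - T.m₁ ≫ r) ≫ T.m₁ = 0 := by
    rw [Preadditive.sub_comp, Category.id_comp, Category.assoc, hr, Category.comp_id, sub_self]
  obtain ⟨h, hh⟩ := tri_liftLemma Se hTS (hTS.rotate _ (hTS.rotate _ hT))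
    (Se.functor.map (𝟙 T.obj₁ - T.m₁ ≫ r))
    (by
      show Se.functor.map _ ≫ (-Se.functor.map T.m₁) = 0
      rw [Preadditive.comp_neg, ← Functor.map_comp, he, sig_map_zero, neg_zero])
  have hz : h = 0 := h3.eq_of_tgt h 0
  have : Se.functor.map (𝟙 T.obj₁ - T.m₁ ≫ r) = 0 := by
    rw [← hh, hz, zero_comp]
  have h0 : 𝟙 T.obj₁ - T.m₁ ≫ r = 0 := by
    apply Se.fullyFaithfulFunctor.map_injective
    rw [this, sig_map_zero]
  rw [sub_eq_zero] at h0
  exact h0.symm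

lemma vanish_prop3 {T : Tri S Se.functor} (hT : T ∈ dist) {U : S}
    (h2 : ∀ φ : U ⟶ T.obj₂, φ = 0) (h4 : ∀ ψ' : U ⟶ Se.functor.obj T.obj₁, ψ' = 0) :
    ∀ ψ : U ⟶ T.obj₃, ψ = 0 := by
  intro ψ
  obtain ⟨h, hh⟩ := tri_lift3 Se hTS hT ψ (h4 (ψ ≫ T.m₃))
  rw [← hh, h2 h, zero_comp]

end TS

end AuxTri

end Paper

namespace Paper

section AuxMain

variable {D : Type u} [Category.{v} D] [Preadditive D] [HasZeroObject D] {Om : D ⥤ D}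
variable (L : LeftTriangStruct D Om) (X : Set D) (d : ℕ)
variable {S : Type w} [Category.{w'} S] [Preadditive S] [HasZeroObject S]
variable (st : IsStabilization Om S) (Se : S ≌ S)
variable (σ : ∀ (A : D) (n : ℤ), Se.functor.obj (st.obj A n) ≅ st.obj A (n - 1))

lemma memX_pow (hX2 : ∀ A ∈ X, (fpow Om d).obj A ∈ X) :
    ∀ (q : ℕ) (A : D), A ∈ X → (fpow Om (d * q)).obj A ∈ X
  | 0, _, hA => hA
  | q + 1, A, hA => by
      rw [Nat.mul_succ, fpow_add_obj Om (d * q) d A]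
      exact hX2 _ (memX_pow hX2 q A hA)

lemma not_dvd_shift (hd : 0 < d) (k l : ℤ) (i : ℕ) (h1 : 1 ≤ i) (h2 : i + 1 ≤ d) :
    ¬ ((d : ℤ) ∣ ((d : ℤ) * k - ((d : ℤ) * l - (i : ℤ)))) := by
  intro hdvd
  have h3 : (d : ℤ) * k - ((d : ℤ) * l - (i : ℤ)) = (d : ℤ) * (k - l) + (i : ℤ) := by ring
  rw [h3] at hdvd
  have h4 : (d : ℤ) ∣ (i : ℤ) := (dvd_add_right (dvd_mul_right _ _)).mp hdvd
  have h5 : (d : ℤ) ≤ (i : ℤ) := Int.le_of_dvd (by exact_mod_cast h1) h4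
  omega

lemma homZero (hd : 0 < d) (hXc : ClusterTiltingLTDZ L X d)
    {A B : D} (hA : A ∈ X) (hB : B ∈ X) (m n : ℤ) (hnd : ¬ ((d : ℤ) ∣ (m - n))) :
    ∀ φ : st.obj A m ⟶ st.obj B n, φ = 0 := by
  intro φ
  obtain ⟨a, b, h, f, rfl⟩ := st.lift_surj φ
  have hdZ : (0 : ℤ) < (d : ℤ) := by exact_mod_cast hd
  set e : ℤ := (m - n) % (d : ℤ) with he
  have he0 : 0 ≤ e := Int.emod_nonneg _ (by omega)
  have hed : e < (d : ℤ) := Int.emod_lt_of_pos _ hdZ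
  have hene : e ≠ 0 := fun h0 => hnd (Int.dvd_of_emod_eq_zero h0)
  obtain ⟨c, hc⟩ : ∃ c : ℤ, m - n = (d : ℤ) * c + e :=
    ⟨(m - n) / (d : ℤ), by have := Int.mul_ediv_add_emod (m - n) (d : ℤ); linarith⟩
  set i : ℕ := e.toNat with hi
  have hie : (i : ℤ) = e := Int.toNat_of_nonneg he0
  set q : ℕ := b / d with hq
  set r : ℕ := b % d with hr
  have hb1 : d * q + r = b := Nat.div_add_mod b d
  have hrd : r < d := Nat.mod_lt _ hd
  set j : ℕ := d - r with hj
  have hbj : b + j = d * (q + 1) := by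
    rw [Nat.mul_succ, ← hb1, Nat.add_assoc, Nat.add_sub_cancel' hrd.le]
  have hbjZ : ((b : ℤ) + (j : ℤ)) = (d : ℤ) * ((q : ℤ) + 1) := by exact_mod_cast hbj
  have habZ : (a : ℤ) - (b : ℤ) = m - n := by linarith [h]
  have haj : ((a : ℤ) + (j : ℤ)) = (d : ℤ) * ((q : ℤ) + 1 + c) + (i : ℤ) := by
    rw [mul_add, ← hbjZ]
    linarith [habZ, hc, hie]
  have hs0 : (0 : ℤ) ≤ (q : ℤ) + 1 + c := by
    by_contra hneg
    push_neg at hneg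
    have h1 : (q : ℤ) + 1 + c ≤ -1 := by omega
    have h2 : (d : ℤ) * ((q : ℤ) + 1 + c) ≤ (d : ℤ) * (-1) :=
      mul_le_mul_of_nonneg_left h1 (by omega)
    have h3 : (0 : ℤ) ≤ (a : ℤ) + (j : ℤ) := by positivity
    linarith [haj, h2, h3, hie, hed]
  set u : ℕ := ((q : ℤ) + 1 + c).toNat with hu
  have huZ : ((u : ℕ) : ℤ) = (q : ℤ) + 1 + c := Int.toNat_of_nonneg hs0
  have hajN : a + j = d * u + i := by
    have hcast : ((a + j : ℕ) : ℤ) = ((d * u + i : ℕ) : ℤ) := by push_cast; rw [huZ]; linarith [haj]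
    exact_mod_cast hcast
  have h1i : 1 ≤ i := by omega
  have h2i : i + 1 ≤ d := by omega
  have hXA : (fpow Om (d * u)).obj A ∈ X := memX_pow X d hXc.2 u A hA
  have hXB : (fpow Om (d * (q + 1))).obj B ∈ X := memX_pow X d hXc.2 (q + 1) B hB
  have t1 : (fpow Om (a + j)).obj A = (fpow Om i).obj ((fpow Om (d * u)).obj A) := by
    rw [hajN, fpow_add_obj]
  have t2 : (fpow Om (b + j)).obj B = (fpow Om (d * (q + 1))).obj B := by rw [hbj]
  have hv := hXc.1.hom_vanish _ _ hXB hXA i h1i h2i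
    (eqToHom t1.symm ≫ raiseN Om j f ≫ eqToHom t2)
  have hf0 : raiseN Om j f = 0 := by
    calc raiseN Om j f
        = eqToHom t1 ≫ (eqToHom t1.symm ≫ raiseN Om j f ≫ eqToHom t2) ≫ eqToHom t2.symm := by
          simp
      _ = 0 := by rw [hv]; simp
  have h' : ((a + j : ℕ) : ℤ) + n = ((b + j : ℕ) : ℤ) + m := by push_cast; push_cast at h; omega
  rw [← lift_raiseN st a b m n h f j h', hf0, lift_zero']

lemma exists_st_iso (hd : 0 < d) (s : S) :
    ∃ (C : D) (k : ℤ), Nonempty (s ≅ st.obj C ((d : ℤ) * k)) := by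
  obtain ⟨C₀, n, ⟨e⟩⟩ := st.dense s
  have hdZ : (0 : ℤ) < (d : ℤ) := by exact_mod_cast hd
  have hnn : 0 ≤ n % (d : ℤ) := Int.emod_nonneg n (by omega)
  refine ⟨(fpow Om ((n % (d : ℤ)).toNat)).obj C₀, n / (d : ℤ),
    ⟨e ≪≫ stShiftIso st C₀ n ((n % (d : ℤ)).toNat) ≪≫ stCast st _ ?_⟩⟩
  rw [Int.toNat_of_nonneg hnn]
  have := Int.mul_ediv_add_emod n (d : ℤ)
  linarith

lemma dZSet_iso {s s' : S} (e : s ≅ s') (h : s' ∈ dZSet st X d) : s ∈ dZSet st X d := by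
  obtain ⟨A, k, hA, ⟨e'⟩⟩ := h
  exact ⟨A, k, hA, ⟨e ≪≫ e'⟩⟩

lemma retractMem (hd : 0 < d) (hXc : ClusterTiltingLTDZ L X d) (C M : D) (hM : M ∈ X) (k : ℤ)
    (s : st.obj C ((d : ℤ) * k) ⟶ st.obj M ((d : ℤ) * k))
    (r : st.obj M ((d : ℤ) * k) ⟶ st.obj C ((d : ℤ) * k))
    (hsr : s ≫ r = 𝟙 (st.obj C ((d : ℤ) * k))) :
    st.obj C ((d : ℤ) * k) ∈ dZSet st X d := by
  obtain ⟨a, b, hab, f₁, hf₁⟩ := st.lift_surj s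
  obtain ⟨b', c', hbc, f₂, hf₂⟩ := st.lift_surj r
  have hab' : a = b := by exact_mod_cast (by linarith [hab] : ((a : ℕ) : ℤ) = ((b : ℕ) : ℤ))
  have hbc' : b' = c' := by exact_mod_cast (by linarith [hbc] : ((b' : ℕ) : ℤ) = ((c' : ℕ) : ℤ))
  subst hab'
  subst hbc'
  set t : ℕ := a + b' with ht
  set G₂ : (fpow Om t).obj M ⟶ (fpow Om t).obj C :=
    eqToHom (by rw [Nat.add_comm b' a]) ≫ raiseN Om a f₂ ≫ eqToHom (by rw [Nat.add_comm b' a])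
    with hG₂
  have hsl : s = st.lift t t ((d : ℤ) * k) ((d : ℤ) * k) rfl (raiseN Om b' f₁) := by
    rw [hf₁]
    exact (lift_raiseN st a a _ _ hab f₁ b' rfl).symm
  have hrl : r = st.lift t t ((d : ℤ) * k) ((d : ℤ) * k) rfl G₂ := by
    rw [hf₂, ← lift_raiseN st b' b' _ _ hbc f₂ a rfl]
    exact lift_reindex st (Nat.add_comm b' a) (Nat.add_comm b' a) _ _ rfl rfl (raiseN Om a f₂)
  have heq : st.lift t t ((d : ℤ) * k) ((d : ℤ) * k) rfl (raiseN Om b' f₁ ≫ G₂)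
      = st.lift t t ((d : ℤ) * k) ((d : ℤ) * k) rfl (𝟙 ((fpow Om t).obj C)) := by
    rw [← st.lift_comp t t t ((d : ℤ) * k) ((d : ℤ) * k) ((d : ℤ) * k) rfl rfl rfl
      (raiseN Om b' f₁) G₂, ← hsl, ← hrl, hsr, st.lift_id t ((d : ℤ) * k) rfl]
  obtain ⟨j, j', hjj, _, hheq⟩ := st.lift_inj t t t t ((d : ℤ) * k) ((d : ℤ) * k) rfl rfl _ _ heq
  have hjeq : j = j' := by omega
  subst hjeq
  have hI : raiseN Om j (raiseN Om b' f₁ ≫ G₂) = raiseN Om j (𝟙 ((fpow Om t).obj C)) :=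
    eq_of_heq hheq
  rw [raiseN_comp, raiseN_id] at hI
  set L0 : ℕ := t + j with hL0
  set q2 : ℕ := L0 / d with hq2
  set r2 : ℕ := L0 % d with hr2
  have hdm : d * q2 + r2 = L0 := Nat.div_add_mod L0 d
  have hr2d : r2 < d := Nat.mod_lt _ hd
  have key : L0 + (d - r2) = d * (q2 + 1) := by
    rw [Nat.mul_succ, ← hdm, Nat.add_assoc, Nat.add_sub_cancel' hr2d.le]
  have hretr : raiseN Om (d - r2) (raiseN Om j (raiseN Om b' f₁))
      ≫ raiseN Om (d - r2) (raiseN Om j G₂) = 𝟙 ((fpow Om (L0 + (d - r2))).obj C) := by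
    rw [← raiseN_comp, hI, raiseN_id]
  have hmemM : (fpow Om (L0 + (d - r2))).obj M ∈ X := by
    rw [key]; exact memX_pow X d hXc.2 (q2 + 1) M hM
  have hmemC : (fpow Om (L0 + (d - r2))).obj C ∈ X :=
    hXc.1.summand_closed hmemM _ _ hretr
  refine ⟨(fpow Om (L0 + (d - r2))).obj C, k - ((q2 : ℤ) + 1), hmemC,
    ⟨stShiftIso st C ((d : ℤ) * k) (L0 + (d - r2)) ≪≫ stCast st _ ?_⟩⟩
  have hcast : ((L0 + (d - r2) : ℕ) : ℤ) = (d : ℤ) * ((q2 : ℤ) + 1) := by exact_mod_cast key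
  rw [hcast]; ring

end AuxMain

end Paper

namespace Paper

section AuxInduct

variable {D : Type u} [Category.{v} D] [Preadditive D] [HasZeroObject D] {Om : D ⥤ D}
variable (L : LeftTriangStruct D Om) (X : Set D) (d : ℕ)
variable {S : Type w} [Category.{w'} S] [Preadditive S] [HasZeroObject S]
variable (st : IsStabilization Om S) (Se : S ≌ S)
variable (σ : ∀ (A : D) (n : ℤ), Se.functor.obj (st.obj A n) ≅ st.obj A (n - 1))
variable (hTS : TriangStructOn S Se (stdTriangles L st Se σ))

include hTS in
lemma lemA (k : ℤ) :
    ∀ {n : ℕ} {A B : D} (_ : LTChain L X n A B), IsZero A →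
    ∀ (V : S),
      (∀ t : ℕ, t < n → ∀ M ∈ X,
        ∀ φ : st.obj M ((d : ℤ) * k) ⟶ (fpow Se.functor t).obj V, φ = 0) →
      ∀ g : st.obj B ((d : ℤ) * k) ⟶ V, g = 0 := by
  intro n A B ch
  induction ch with
  | zero A0 => intro hA V _ g; exact (st_isZero st hA _).eq_of_src g 0
  | succ hc hM u v w ht ih =>
    intro hA V hvan g
    obtain ⟨μ₁, μ₂, μ₃, hTs⟩ := stdTriAt L st Se σ ht ((d : ℤ) * k)
    have hcond : μ₃ ≫ Se.functor.map g = 0 := by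
      refine ih hA (Se.functor.obj V) ?_ (μ₃ ≫ Se.functor.map g)
      intro t htn M' hM' φ
      have e : (fpow Se.functor t).obj (Se.functor.obj V) = (fpow Se.functor (t + 1)).obj V :=
        fpow_swap_obj Se.functor t V
      have h0 : φ ≫ eqToHom e = 0 := hvan (t + 1) (by omega) M' hM' (φ ≫ eqToHom e)
      calc φ = (φ ≫ eqToHom e) ≫ eqToHom e.symm := by simp
        _ = 0 := by rw [h0]; simp
    obtain ⟨h', hh'⟩ := ext_along_m1 Se hTS hTs g hcond
    have hz : h' = 0 := hvan 0 (by omega) _ hM h'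
    rw [← hh', hz, comp_zero]

include hTS in
lemma masterApprox (k : ℤ) (Mw : D) (hMw : Mw ∈ X) :
    ∀ {n : ℕ} {A B : D} (_ : LTChain L X n A B),
    ∃ (M₀ : D), M₀ ∈ X ∧ ∃ p : st.obj M₀ ((d : ℤ) * k) ⟶ st.obj A ((d : ℤ) * k),
      ∀ U : S,
        (∀ M ∈ X, ∀ i : ℕ, 1 ≤ i → i + 1 ≤ n →
          ∀ φ : U ⟶ (fpow Se.functor i).obj (st.obj M ((d : ℤ) * k)), φ = 0) →
        (∀ ψ : U ⟶ (fpow Se.functor n).obj (st.obj B ((d : ℤ) * k)), ψ = 0) →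
        ∀ g : U ⟶ st.obj A ((d : ℤ) * k), ∃ h : U ⟶ st.obj M₀ ((d : ℤ) * k), h ≫ p = g := by
  intro n A B ch
  induction ch with
  | zero A0 =>
    refine ⟨Mw, hMw, 0, fun U _ htop g => ⟨0, ?_⟩⟩
    rw [zero_comp]
    exact (htop g).symm
  | succ hc hM u v w ht ih =>
    obtain ⟨μ₁, μ₂, μ₃, hTs⟩ := stdTriAt L st Se σ ht ((d : ℤ) * k)
    rename_i n' A' B' B'' M'
    rcases Nat.eq_zero_or_pos n' with hn | hn
    · subst hn
      cases hc
      refine ⟨M', hM, μ₂, fun U hyM htop g => ?_⟩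
      exact tri_lift3 Se hTS hTs g (htop (g ≫ μ₃))
    · obtain ⟨M₀, hM₀, p, hprop⟩ := ih
      refine ⟨M₀, hM₀, p, fun U hyM htop g => ?_⟩
      refine hprop U (fun M1 hM1 i h1 h2 => hyM M1 hM1 i h1 (by omega)) ?_ g
      exact vanish_prop3 Se hTS (susp_dist Se hTS hTs n')
        (fun φ => hyM _ hM n' (by omega) (by omega) φ) (fun ψ' => htop ψ')

include hTS in
lemma approx_data (hd : 0 < d) (hXc : ClusterTiltingLTDZ L X d) (C : D) (k : ℤ) :
    ∃ (M₀ : D), M₀ ∈ X ∧ ∃ f : st.obj M₀ ((d : ℤ) * k) ⟶ st.obj C ((d : ℤ) * k),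
      ∀ U : S,
        (∀ M ∈ X, ∀ i : ℕ, 1 ≤ i → i + 1 ≤ d →
          ∀ φ : U ⟶ (fpow Se.functor i).obj (st.obj M ((d : ℤ) * k)), φ = 0) →
        ∀ g : U ⟶ st.obj C ((d : ℤ) * k), ∃ h : U ⟶ st.obj M₀ ((d : ℤ) * k), h ≫ f = g := by
  obtain ⟨Z₀, Z₁, W, u, v, w, hZ0, hTd, hch, hW⟩ := hXc.1.res C
  obtain ⟨μ₁, μ₂, μ₃, hT1⟩ := stdTriAt L st Se σ hTd ((d : ℤ) * k)
  obtain ⟨r, hr1, hr2⟩ := tri_iso_of_zero3 Se hTS hT1 (st_isZero st hZ0 _)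
  rcases Nat.lt_or_ge d 2 with hd1 | hd2
  · rw [show d - 1 = 0 from by omega] at hch
    cases hch
    refine ⟨Z₁, hW, μ₁, fun U _ g => ⟨g ≫ r, ?_⟩⟩
    rw [Category.assoc, hr2, Category.comp_id]
  · obtain ⟨M₀, hM₀, p, hprop⟩ := masterApprox L X d st Se σ hTS k W hW hch
    refine ⟨M₀, hM₀, p ≫ μ₁, fun U hyp g => ?_⟩
    obtain ⟨h, hh⟩ := hprop U (fun M hM i h1 h2 => hyp M hM i h1 (by omega))
      (fun ψ => hyp W hW (d - 1) (by omega) (by omega) ψ) (g ≫ r)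
    refine ⟨h, ?_⟩
    rw [← Category.assoc, hh, Category.assoc, hr2, Category.comp_id]

include hTS in
lemma coapprox_data (hd : 0 < d) (hXc : ClusterTiltingLTDZ L X d) (C : D) (k : ℤ) :
    ∃ (M₀ : D), M₀ ∈ X ∧ ∃ f : st.obj C ((d : ℤ) * k) ⟶ st.obj M₀ ((d : ℤ) * k),
      ∀ V : S,
        (∀ t : ℕ, t + 1 ≤ d - 1 → ∀ M ∈ X,
          ∀ φ : st.obj M ((d : ℤ) * k) ⟶ (fpow Se.functor t).obj (Se.functor.obj V), φ = 0) →
        ∀ g : st.obj C ((d : ℤ) * k) ⟶ V, ∃ h : st.obj M₀ ((d : ℤ) * k) ⟶ V, f ≫ h = g := by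
  obtain ⟨Z₀, hZ0, hch⟩ := hXc.1.cores C
  obtain ⟨m, hm⟩ : ∃ m, d = m + 1 := ⟨d - 1, by omega⟩
  subst hm
  cases hch with
  | succ hc hM u v w ht =>
    obtain ⟨μ₁, μ₂, μ₃, hTs⟩ := stdTriAt L st Se σ ht (((m + 1 : ℕ) : ℤ) * k)
    rename_i B' M'
    refine ⟨M', hM, μ₁, fun V hvan g => ?_⟩
    have hcond : μ₃ ≫ Se.functor.map g = 0 := by
      refine lemA L X (m + 1) st Se σ hTS k hc hZ0 (Se.functor.obj V) ?_ (μ₃ ≫ Se.functor.map g)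
      intro t htn M1 hM1 φ
      exact hvan t (by omega) M1 hM1 φ
    exact ext_along_m1 Se hTS hTs g hcond

include σ in
lemma vanish_into (hd : 0 < d) (hXc : ClusterTiltingLTDZ L X d) {U : S} {B : D} (hB : B ∈ X)
    (l : ℤ) (eU : U ≅ st.obj B ((d : ℤ) * l)) {M : D} (hM : M ∈ X) (k : ℤ) (i : ℕ)
    (h1 : 1 ≤ i) (h2 : i + 1 ≤ d) :
    ∀ φ : U ⟶ (fpow Se.functor i).obj (st.obj M ((d : ℤ) * k)), φ = 0 :=
  conj_zero eU (sigNIso st Se σ M ((d : ℤ) * k) i)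
    (homZero L X d st hd hXc hB hM ((d : ℤ) * l) ((d : ℤ) * k - (i : ℤ))
      (not_dvd_shift d hd l k i h1 h2))

include σ in
lemma sigd_closure : ∀ s ∈ dZSet st X d, (fpow Se.functor d).obj s ∈ dZSet st X d := by
  intro s hs
  obtain ⟨A, k, hA, ⟨e⟩⟩ := hs
  refine ⟨A, k - 1, hA, ⟨(fpow Se.functor d).mapIso e ≪≫ sigNIso st Se σ A ((d : ℤ) * k) d
    ≪≫ stCast st _ ?_⟩⟩
  push_cast
  ring

include σ in
lemma dZ_vanish_left (hd : 0 < d) (hXc : ClusterTiltingLTDZ L X d) :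
    ∀ Eo ∈ dZSet st X d, ∀ M' ∈ dZSet st X d, ∀ i : ℕ, 1 ≤ i → i + 1 ≤ d →
      ∀ f : Eo ⟶ (fpow Se.functor i).obj M', f = 0 := by
  intro Eo hEo M' hM' i h1 h2 f
  obtain ⟨A, k, hA, ⟨e₁⟩⟩ := hEo
  obtain ⟨B, l, hB, ⟨e₂⟩⟩ := hM'
  exact conj_zero e₁ ((fpow Se.functor i).mapIso e₂ ≪≫ sigNIso st Se σ B ((d : ℤ) * l) i)
    (homZero L X d st hd hXc hA hB ((d : ℤ) * k) ((d : ℤ) * l - (i : ℤ))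
      (not_dvd_shift d hd k l i h1 h2)) f

include σ in
lemma dZ_vanish_right (hd : 0 < d) (hXc : ClusterTiltingLTDZ L X d) :
    ∀ Eo ∈ dZSet st X d, ∀ M' ∈ dZSet st X d, ∀ i : ℕ, 1 ≤ i → i + 1 ≤ d →
      ∀ f : M' ⟶ (fpow Se.functor i).obj Eo, f = 0 := by
  intro Eo hEo M' hM' i h1 h2 f
  obtain ⟨A, k, hA, ⟨e₁⟩⟩ := hEo
  obtain ⟨B, l, hB, ⟨e₂⟩⟩ := hM'
  exact conj_zero e₂ ((fpow Se.functor i).mapIso e₁ ≪≫ sigNIso st Se σ A ((d : ℤ) * k) i)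
    (homZero L X d st hd hXc hB hA ((d : ℤ) * l) ((d : ℤ) * k - (i : ℤ))
      (not_dvd_shift d hd l k i h1 h2)) f

end AuxInduct

end Paper

namespace Paper

/-- Theorem 5.6. If `𝒳` is a `dℤ`-cluster tilting subcategory of a
left triangulated category `𝒞`, then `dℤ𝒳` is a `dℤ`-cluster tilting subcategory of
the triangulated stabilization `ℤ𝒞` (whose suspension is `Σ(C,n) = (C,n-1)`). -/
theorem statement9 {D : Type u} [Category.{v} D] [Preadditive D] [HasZeroObject D]
    {Om : D ⥤ D} (L : LeftTriangStruct D Om) (X : Set D) (d : ℕ) (hd : 0 < d)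
    (hX : ClusterTiltingLTDZ L X d)
    {S : Type w} [Category.{w'} S] [Preadditive S] [HasZeroObject S]
    (st : IsStabilization Om S) (Se : S ≌ S)
    (σ : ∀ (A : D) (n : ℤ), Se.functor.obj (st.obj A n) ≅ st.obj A (n - 1))
    (hσ : ∀ {A B : D} (a b : ℕ) (m n : ℤ) (h : (a : ℤ) + n = (b : ℤ) + m)
      (h' : (a : ℤ) + (n - 1) = (b : ℤ) + (m - 1)) (f : (fpow Om a).obj A ⟶ (fpow Om b).obj B),
      Se.functor.map (st.lift a b m n h f)
        = (σ A m).hom ≫ st.lift a b (m - 1) (n - 1) h' f ≫ (σ B n).inv)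
    (hTS : TriangStructOn S Se (stdTriangles L st Se σ)) :
    ClusterTiltingTriDZ S Se.functor (dZSet st X d) d := by
  refine ⟨⟨?_, ?_, ?_, ?_⟩,
    fun s hs => sigd_closure (X := X) (d := d) (st := st) (Se := Se) (σ := σ) s hs⟩
  · -- contravariantly finite
    intro s
    obtain ⟨C, k, ⟨eE⟩⟩ := exists_st_iso (d := d) (st := st) hd s
    obtain ⟨M₀, hM₀, f, hprop⟩ := approx_data (L := L) (X := X) (d := d) (st := st) (Se := Se)
      (σ := σ) (hTS := hTS) hd hX C k
    refine ⟨st.obj M₀ ((d : ℤ) * k), f ≫ eE.inv, ⟨M₀, k, hM₀, ⟨Iso.refl _⟩⟩, ?_⟩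
    intro M' hM' g
    obtain ⟨B, l, hB, ⟨eM⟩⟩ := hM'
    obtain ⟨h, hh⟩ := hprop M'
      (fun M hM i h1 h2 φ => vanish_into (L := L) (X := X) (d := d) (st := st) (Se := Se)
        (σ := σ) hd hX hB l eM hM k i h1 h2 φ)
      (g ≫ eE.hom)
    refine ⟨h, ?_⟩
    rw [← Category.assoc, hh, Category.assoc, eE.hom_inv_id, Category.comp_id]
  · -- covariantly finite
    intro s
    obtain ⟨C, k, ⟨eE⟩⟩ := exists_st_iso (d := d) (st := st) hd s
    obtain ⟨M₀, hM₀, f, hprop⟩ := coapprox_data (L := L) (X := X) (d := d) (st := st) (Se := Se)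
      (σ := σ) (hTS := hTS) hd hX C k
    refine ⟨st.obj M₀ ((d : ℤ) * k), eE.hom ≫ f, ⟨M₀, k, hM₀, ⟨Iso.refl _⟩⟩, ?_⟩
    intro M' hM' g
    obtain ⟨B, l, hB, ⟨eM⟩⟩ := hM'
    obtain ⟨h, hh⟩ := hprop M'
      (fun t ht M hM φ => conj_zero (Iso.refl _)
        (eqToIso (fpow_swap_obj Se.functor t M') ≪≫ (fpow Se.functor (t + 1)).mapIso eM
          ≪≫ sigNIso st Se σ B ((d : ℤ) * l) (t + 1))
        (homZero (L := L) (X := X) (d := d) (st := st) hd hX hM hB ((d : ℤ) * k)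
          ((d : ℤ) * l - ((t + 1 : ℕ) : ℤ))
          (not_dvd_shift d hd k l (t + 1) (by omega) (by omega))) φ)
      (eE.inv ≫ g)
    refine ⟨h, ?_⟩
    rw [Category.assoc, hh, ← Category.assoc, eE.hom_inv_id, Category.id_comp]
  · -- eq_left
    refine Set.Subset.antisymm ?_ ?_
    · intro Eo hEo
      exact fun M' hM' i h1 h2 f => dZ_vanish_left (L := L) (X := X) (d := d) (st := st)
        (Se := Se) (σ := σ) hd hX Eo hEo M' hM' i h1 h2 f
    · intro Eo hEo
      obtain ⟨C, k, ⟨eE⟩⟩ := exists_st_iso (d := d) (st := st) hd Eo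
      obtain ⟨M₀, hM₀, f, hprop⟩ := approx_data (L := L) (X := X) (d := d) (st := st) (Se := Se)
        (σ := σ) (hTS := hTS) hd hX C k
      obtain ⟨h, hh⟩ := hprop (st.obj C ((d : ℤ) * k))
        (fun M hM i h1 h2 φ => conj_zero eE.symm (Iso.refl _)
          (fun ψ => hEo (st.obj M ((d : ℤ) * k)) ⟨M, k, hM, ⟨Iso.refl _⟩⟩ i h1 h2 ψ) φ)
        (𝟙 _)
      exact dZSet_iso (st := st) (X := X) (d := d) eE
        (retractMem (L := L) (X := X) (d := d) (st := st) hd hX C M₀ hM₀ k h f hh)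
  · -- eq_right
    refine Set.Subset.antisymm ?_ ?_
    · intro Eo hEo
      exact fun M' hM' i h1 h2 f => dZ_vanish_right (L := L) (X := X) (d := d) (st := st)
        (Se := Se) (σ := σ) hd hX Eo hEo M' hM' i h1 h2 f
    · intro Eo hEo
      obtain ⟨C, k, ⟨eE⟩⟩ := exists_st_iso (d := d) (st := st) hd Eo
      obtain ⟨M₀, hM₀, f, hprop⟩ := coapprox_data (L := L) (X := X) (d := d) (st := st) (Se := Se)
        (σ := σ) (hTS := hTS) hd hX C k
      obtain ⟨h, hh⟩ := hprop (st.obj C ((d : ℤ) * k))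
        (fun t ht M hM φ => conj_zero (Iso.refl _)
          (eqToIso (fpow_swap_obj Se.functor t (st.obj C ((d : ℤ) * k)))
            ≪≫ (fpow Se.functor (t + 1)).mapIso eE.symm)
          (fun ψ => hEo (st.obj M ((d : ℤ) * k)) ⟨M, k, hM, ⟨Iso.refl _⟩⟩ (t + 1)
            (by omega) (by omega) ψ) φ)
        (𝟙 _)
      exact dZSet_iso (st := st) (X := X) (d := d) eE
        (retractMem (L := L) (X := X) (d := d) (st := st) hd hX C M₀ hM₀ k f h hh)

end Paper
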